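/- Let n ≥ 1, let q ∈ ℂ with q ≠ 0 and q² ≠ 1, and set ω = q − q⁻¹. Suppose for each i ∈ {1,...,n} we choose a(i,i) ∈ {q/ω, −q⁻¹/ω}, and for i ≠ k we set a(i,k) = b(i,k)/ω where b(i,k) ∈ ℂ satisfy b(i,k)·b(k,i) = 1. Then S = Σ_{i,k} a(i,k) E_{ii} ⊗ E_{kk} satisfies the Hecke condition S₂₁ * S − σ_D * S = λ² (1 ⊗ 1) with λ = 1/ω, where σ_D = Σ_i E_{ii} ⊗ E_{ii}. -/

import Mathlib

open scoped TensorProduct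

noncomputable section

variable (M : Type) [Ring M] [Algebra ℂ M]

/-- `T₂₁`: the element of `M ⊗ M` with the two tensor factors swapped. -/
noncomputable def swapT (T : M ⊗[ℂ] M) : M ⊗[ℂ] M :=
  Algebra.TensorProduct.comm ℂ M M T

/-- The matrix units `E i j`. -/
noncomputable def E (n : ℕ) (i j : Fin n) : Matrix (Fin n) (Fin n) ℂ :=
  Matrix.single i j 1


lemma Emul (n : ℕ) (i j k l : Fin n) :
    E n i j * E n k l = if j = k then E n i l else 0 := by
  split
  · next h => subst h; simp [E]
  · next h => simp [E, h]

lemma one_eq_sumE (n : ℕ) : (1 : Matrix (Fin n) (Fin n) ℂ) = ∑ i, E n i i := by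
  ext j k
  simp only [Matrix.sum_apply, E, Matrix.single, Matrix.one_apply, Matrix.of_apply]
  rw [Finset.sum_boole]
  rcases eq_or_ne j k with rfl | h
  · simp [Finset.filter_eq']
  · rw [if_neg h, Finset.filter_false_of_mem, Finset.card_empty, Nat.cast_zero]
    rintro x - ⟨rfl, rfl⟩
    exact h rfl

lemma prod_sum (n : ℕ) (c d : Fin n → Fin n → ℂ) :
    (∑ i, ∑ k, c i k • (E n i i ⊗ₜ[ℂ] E n k k))
      * (∑ i, ∑ k, d i k • (E n i i ⊗ₜ[ℂ] E n k k))
    = ∑ i, ∑ k, (c i k * d i k) • (E n i i ⊗ₜ[ℂ] E n k k) := by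
  simp only [Finset.sum_mul, Finset.mul_sum, smul_mul_smul_comm,
    Algebra.TensorProduct.tmul_mul_tmul, Emul]
  simp [TensorProduct.ite_tmul, TensorProduct.tmul_ite, smul_ite, Finset.sum_ite_eq,
    ite_and, apply_ite]

/-- The principal solution of the Hecke condition in the diagonal subalgebra:
with `a(i,i) ∈ {q/ω, −q⁻¹/ω}` and `a(i,k) = b(i,k)/ω`, `b(i,k) b(k,i) = 1` for
`i ≠ k`, the element `S = Σ a(i,k) E_{ii} ⊗ E_{kk}` satisfies
`S₂₁ S − σ_D S = (1/ω)² (1 ⊗ 1)`. -/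
theorem stmt15 (n : ℕ) (hn : 1 ≤ n) (q : ℂ) (hq : q ≠ 0) (hq2 : q ^ 2 ≠ 1)
    (ω : ℂ) (hω : ω = q - q⁻¹)
    (a b : Fin n → Fin n → ℂ)
    (haii : ∀ i, a i i = q / ω ∨ a i i = -q⁻¹ / ω)
    (hab : ∀ i k, i ≠ k → a i k = b i k / ω)
    (hb : ∀ i k, i ≠ k → b i k * b k i = 1) :
    swapT _ (∑ i, ∑ k, a i k • (E n i i ⊗ₜ[ℂ] E n k k))
        * (∑ i, ∑ k, a i k • (E n i i ⊗ₜ[ℂ] E n k k))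
      - (∑ i, E n i i ⊗ₜ[ℂ] E n i i)
        * (∑ i, ∑ k, a i k • (E n i i ⊗ₜ[ℂ] E n k k))
      = (1 / ω) ^ 2 • (1 : Matrix (Fin n) (Fin n) ℂ ⊗[ℂ] Matrix (Fin n) (Fin n) ℂ) := by
  have hω0 : ω ≠ 0 := by
    rw [hω, sub_ne_zero]
    intro h
    apply hq2
    have h1 := mul_inv_cancel₀ hq
    rw [← h] at h1
    rw [sq]; exact h1
  have key : ∀ i k : Fin n, a k i * a i k - (if i = k then (1:ℂ) else 0) * a i k
      = (1/ω)^2 := by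
    intro i k
    rcases eq_or_ne i k with rfl | h
    · rw [if_pos rfl, one_mul]
      have hsplit : ∀ x : ℂ, (x/ω)*(x/ω) - x/ω = (x*x - x*ω)/(ω*ω) := by
        intro x; field_simp
      have hpow : ((1:ℂ)/ω)^2 = 1/(ω*ω) := by rw [div_pow, one_pow, sq]
      rcases haii i with h1 | h1 <;> rw [h1, hsplit, hpow]
      · congr 1
        rw [hω, mul_sub, mul_inv_cancel₀ hq]; ring
      · congr 1
        rw [hω]; field_simp; ring
    · rw [if_neg h, zero_mul, sub_zero, hab i k h, hab k i h.symm]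
      field_simp
      rw [mul_comm (b k i) (b i k), hb i k h]
  have hσ : (∑ i, E n i i ⊗ₜ[ℂ] E n i i)
      = ∑ i, ∑ k, (if i = k then (1:ℂ) else 0) • (E n i i ⊗ₜ[ℂ] E n k k) := by
    simp [ite_smul]
  have hswap : swapT _ (∑ i, ∑ k, a i k • (E n i i ⊗ₜ[ℂ] E n k k))
      = ∑ i, ∑ k, a k i • (E n i i ⊗ₜ[ℂ] E n k k) := by
    simp only [swapT, map_sum, map_smul, Algebra.TensorProduct.comm_tmul]
    exact Finset.sum_comm
  rw [hswap, hσ, prod_sum, prod_sum]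
  simp only [← Finset.sum_sub_distrib, ← sub_smul, key, ← Finset.smul_sum]
  congr 1
  rw [Algebra.TensorProduct.one_def, one_eq_sumE]
  simp only [TensorProduct.sum_tmul, TensorProduct.tmul_sum]
  rw [Finset.sum_comm]
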